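/- Let f = I·F ∈ G_B^I. Then S_f^{−1} · I · S_f = (F · I) ∘ (I · S_f) = (F · I) ∘ (I · F)^{∘−1}, where S_f is the S-transform of f defined by f^{∘−1} = I · S_f. -/

import Mathlib

universe u

/-- A (formal) series of `n`-ary functions on `B` (the carrier of `Mult[[B]]`). -/
def MSeries (B : Type u) : Type u := ∀ n : ℕ, (Fin n → B) → B

namespace MSeries

variable {B : Type u} [Ring B]

/-- The multiplication `(f · g)_n(x₁,…,xₙ) = ∑ₖ f_k(x₁,…,x_k) g_{n-k}(x_{k+1},…,xₙ)`. -/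
def mul (f g : MSeries B) : MSeries B := fun n x =>
  ∑ k : Fin (n + 1),
    f k.1 (fun i => x (Fin.castLE (Nat.lt_succ_iff.mp k.isLt) i)) *
      g (n - k.1) (fun i => x ⟨k.1 + i.1, by have h1 := k.isLt; have h2 := i.isLt; omega⟩)

/-- The composition `(f ∘ g)_n(x₁,…,xₙ)
  = ∑_{n = k₁ + ⋯ + k_l, kᵢ ≥ 1} f_l(g_{k₁}(x₁,…), …, g_{k_l}(…,xₙ))`. -/
def comp (f g : MSeries B) : MSeries B := fun n x =>
  ∑ c : Composition n,
    f c.length (fun i => g (c.blocksFun i) (fun j => x (c.embedding i j)))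

/-- The compositional identity `I = (δ_{n,1} Id)`. -/
def idS : MSeries B := fun n =>
  match n with
  | 1 => fun x => x 0
  | _ => fun _ => 0

/-- The multiplicative unit `1 = (δ_{n,0} 1)`. -/
def oneS : MSeries B := fun n _ => if n = 0 then 1 else 0

end MSeries

/-- `f` is a series of `K`-multilinear functions, i.e. `f ∈ Mult[[B]]`. -/
def IsMultSeries (K : Type u) [Field K] {B : Type u} [Ring B] [Algebra K B]
    (f : MSeries B) : Prop :=
  ∀ n, ∃ F : MultilinearMap K (fun _ : Fin n => B) B, ∀ x, f n x = F x

set_option linter.unusedSectionVars false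

namespace MSeries

variable {B : Type u} [Ring B]

lemma apply_congr (f : MSeries B) {m m' : ℕ} (h : m = m') {x : Fin m → B} {y : Fin m' → B}
    (hxy : ∀ i : Fin m', x ⟨i.1, h ▸ i.2⟩ = y i) : f m x = f m' y := by
  subst h
  congr 1
  funext i
  simpa using hxy i

lemma idS_apply_ne {n : ℕ} (h : n ≠ 1) (x : Fin n → B) : idS n x = 0 := by
  match n, h with
  | 0, _ => rfl
  | (k+2), _ => rfl

lemma one_mul (a : MSeries B) : oneS.mul a = a := by
  funext n x
  show ∑ k : Fin (n+1), _ = _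
  rw [Finset.sum_eq_single (0 : Fin (n+1))]
  · show oneS 0 _ * a (n - 0) _ = a n x
    rw [show (oneS 0 : (Fin 0 → B) → B) = fun _ => 1 from rfl, _root_.one_mul]
    exact apply_congr a rfl (fun i => congrArg x (Fin.ext (show 0 + (i:ℕ) = (i:ℕ) by omega)))
  · intro b _ hb
    have : (b : ℕ) ≠ 0 := fun h => hb (Fin.ext h)
    show oneS b.1 _ * _ = 0
    simp [oneS, this]
  · simp

lemma mul_one (a : MSeries B) : a.mul oneS = a := by
  funext n x
  show ∑ k : Fin (n+1), _ = _
  rw [Finset.sum_eq_single (Fin.last n)]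
  · show a n _ * oneS (n - n) _ = a n x
    rw [show (oneS (n-n) : (Fin (n-n) → B) → B) = fun _ => 1 by rw [Nat.sub_self]; rfl, _root_.mul_one]
    exact apply_congr a rfl (fun i => congrArg x (Fin.ext rfl))
  · intro b _ hb
    have hb' : (b : ℕ) ≠ n := fun h => hb (Fin.ext h)
    have : n - b.1 ≠ 0 := by have := b.isLt; omega
    show _ * oneS (n - b.1) _ = 0
    simp [oneS, this]
  · simp

lemma idS_mul_succ (a : MSeries B) (n : ℕ) (x : Fin (n+1) → B) :
    (idS.mul a) (n+1) x = x 0 * a n (fun i => x i.succ) := by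
  show ∑ k : Fin (n+2), _ = _
  rw [Finset.sum_eq_single (⟨1, by omega⟩ : Fin (n+2))]
  · show idS 1 _ * a (n + 1 - 1) _ = _
    refine congrArg₂ (· * ·) ?_ ?_
    · show x (Fin.castLE (by omega) 0) = x 0
      exact congrArg x (Fin.ext rfl)
    · exact apply_congr a rfl
        (fun i => congrArg x (Fin.ext (show 1 + (i:ℕ) = (i:ℕ) + 1 by omega)))
  · intro b _ hb
    have : (b : ℕ) ≠ 1 := fun h => hb (Fin.ext h)
    show idS b.1 _ * _ = 0
    rw [idS_apply_ne this, zero_mul]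
  · simp

lemma idS_mul_zero (a : MSeries B) (x : Fin 0 → B) : (idS.mul a) 0 x = 0 := by
  show ∑ k : Fin 1, _ = _
  rw [Fin.sum_univ_one]
  show idS 0 _ * _ = 0
  rw [idS_apply_ne (by omega), zero_mul]

lemma eq_one_of_idS_mul {a : MSeries B} (h : idS.mul a = idS) : a = oneS := by
  funext n x
  have h1 := congrFun (congrFun h (n+1)) (Fin.cons 1 x)
  rw [idS_mul_succ] at h1
  simp only [Fin.cons_zero, Fin.cons_succ, _root_.one_mul] at h1
  match n with
  | 0 => rw [h1]; rfl
  | (m+1) =>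
    rw [h1, idS_apply_ne (by omega)]
    simp [oneS]


lemma idS_comp (g : MSeries B) (h0 : ∀ x, g 0 x = 0) : idS.comp g = g := by
  funext n x
  rcases Nat.eq_zero_or_pos n with rfl | hn
  · show ∑ c : Composition 0, _ = g 0 x
    rw [h0, Finset.sum_eq_zero]
    intro c _
    exact idS_apply_ne (by have := c.length_le; omega) _
  · show ∑ c : Composition n, _ = g n x
    rw [Finset.sum_eq_single (Composition.single n hn)]
    · have hlen := Composition.single_length hn
      refine (apply_congr idS hlen (y := fun _ => g n x) (fun i => ?_)).trans rfl
      -- goal: g ((single n hn).blocksFun ⟨i.1,_⟩) (fun j => x (embedding _ j)) = g n x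
      refine apply_congr g (by rw [Composition.single_blocksFun]) (fun j => ?_)
      refine congrArg x (Fin.ext ?_)
      rw [Composition.coe_embedding]
      simp [Composition.sizeUpTo_zero]
    · intro c _ hne
      exact idS_apply_ne
        (fun hl => hne ((Composition.eq_single_iff_length hn).2 hl)) _
    · simp


lemma sigma_fin_ext {n : ℕ} {φ : Fin (n+1) → ℕ} {p q : Σ m : Fin (n+1), Fin (φ m)}
    (h1 : p.1.1 = q.1.1) (h2 : p.2.1 = q.2.1) : p = q := by
  obtain ⟨m, k⟩ := p
  obtain ⟨m', k'⟩ := q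
  obtain rfl : m = m' := Fin.ext h1
  obtain rfl : k = k' := Fin.ext h2
  rfl

def assocEquiv (n : ℕ) : (Σ k : Fin (n+1), Fin (n - k.1 + 1)) ≃ (Σ m : Fin (n+1), Fin (m.1+1)) where
  toFun p := ⟨⟨p.1.1 + p.2.1, by have := p.1.isLt; have := p.2.isLt; omega⟩,
    ⟨p.1.1, by show p.1.1 < p.1.1 + p.2.1 + 1; omega⟩⟩
  invFun q := ⟨⟨q.2.1, by have := q.1.isLt; have := q.2.isLt; omega⟩,
    ⟨q.1.1 - q.2.1, by show q.1.1 - q.2.1 < n - q.2.1 + 1; have := q.1.isLt; have := q.2.isLt; omega⟩⟩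
  left_inv := fun ⟨k, l⟩ => sigma_fin_ext rfl (by dsimp; omega)
  right_inv := fun ⟨m, k⟩ => sigma_fin_ext (by dsimp; have := k.isLt; omega) rfl

lemma mul_assoc' (f g h : MSeries B) : (f.mul g).mul h = f.mul (g.mul h) := by
  funext n x
  simp only [mul, Finset.sum_mul, Finset.mul_sum]
  rw [Finset.sum_sigma', Finset.sum_sigma', Finset.univ_sigma_univ, Finset.univ_sigma_univ]
  refine (Fintype.sum_equiv (assocEquiv n) _ _ ?_).symm
  rintro ⟨k, l⟩
  simp only [assocEquiv, Equiv.coe_fn_mk]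
  rw [← _root_.mul_assoc]
  refine congrArg₂ (· * ·) (congrArg₂ (· * ·) ?_ ?_) ?_
  · exact apply_congr f rfl (fun i => congrArg x (Fin.ext rfl))
  · exact apply_congr g (by omega) (fun i => congrArg x (Fin.ext rfl))
  · exact apply_congr h (by omega) (fun i => congrArg x (Fin.ext (by simp only [Fin.val_mk]; omega)))


def capp {a b n : ℕ} (hn : a + b = n) (c1 : Composition a) (c2 : Composition b) :
    Composition n :=
  ⟨c1.blocks ++ c2.blocks, fun hi => by
      rcases List.mem_append.1 hi with hh | hh
      exacts [c1.blocks_pos hh, c2.blocks_pos hh],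
    by rw [List.sum_append, c1.blocks_sum, c2.blocks_sum, hn]⟩

lemma capp_blocks {a b n : ℕ} (hn : a + b = n) (c1 : Composition a) (c2 : Composition b) :
    (capp hn c1 c2).blocks = c1.blocks ++ c2.blocks := rfl

lemma capp_length {a b n : ℕ} (hn : a + b = n) (c1 : Composition a) (c2 : Composition b) :
    (capp hn c1 c2).length = c1.length + c2.length := List.length_append

lemma capp_blocksFun_left {a b n : ℕ} (hn : a + b = n) {c1 : Composition a} {c2 : Composition b}
    (j : Fin (capp hn c1 c2).length) (i : Fin c1.length) (hij : (j : ℕ) = i) :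
    (capp hn c1 c2).blocksFun j = c1.blocksFun i := by
  have h1 : (j : ℕ) < c1.blocks.length := by rw [hij]; exact i.2
  simp only [Composition.blocksFun, List.get_eq_getElem, capp_blocks]
  refine (List.getElem_append_left h1).trans ?_
  simp [hij]

lemma capp_blocksFun_right {a b n : ℕ} (hn : a + b = n) {c1 : Composition a} {c2 : Composition b}
    (j : Fin (capp hn c1 c2).length) (i : Fin c2.length) (hij : (j : ℕ) = c1.length + i) :
    (capp hn c1 c2).blocksFun j = c2.blocksFun i := by
  have h1 : c1.blocks.length ≤ (j : ℕ) := by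
    have hc : c1.length = c1.blocks.length := rfl
    omega
  simp only [Composition.blocksFun, List.get_eq_getElem, capp_blocks]
  refine (List.getElem_append_right h1).trans ?_
  simp [hij]

lemma capp_sizeUpTo_le {a b n : ℕ} (hn : a + b = n) (c1 : Composition a) (c2 : Composition b)
    (k : ℕ) (hk : k ≤ c1.length) :
    (capp hn c1 c2).sizeUpTo k = c1.sizeUpTo k := by
  show ((c1.blocks ++ c2.blocks).take k).sum = (c1.blocks.take k).sum
  rw [List.take_append_of_le_length hk]

lemma capp_sizeUpTo_add {a b n : ℕ} (hn : a + b = n) (c1 : Composition a) (c2 : Composition b)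
    (k : ℕ) :
    (capp hn c1 c2).sizeUpTo (c1.length + k) = a + c2.sizeUpTo k := by
  show ((c1.blocks ++ c2.blocks).take (c1.blocks.length + k)).sum = _
  rw [List.take_length_add_append, List.sum_append, c1.blocks_sum]
  rfl

def takeC {n : ℕ} (c : Composition n) (k : ℕ) : Composition (c.sizeUpTo k) :=
  ⟨c.blocks.take k, fun hi => c.blocks_pos (List.take_subset _ _ hi), rfl⟩

def dropC {n : ℕ} (c : Composition n) (k : ℕ) : Composition (n - c.sizeUpTo k) :=
  ⟨c.blocks.drop k, fun hi => c.blocks_pos (List.drop_subset _ _ hi), by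
    have h1 := c.blocks.sum_take_add_sum_drop k
    have h2 := c.blocks_sum
    have h3 : c.sizeUpTo k = (c.blocks.take k).sum := rfl
    omega⟩

lemma sigmaT1_ext {n : ℕ} {c c' : Composition n} {k : Fin (c.length + 1)}
    {k' : Fin (c'.length + 1)} (hb : c.blocks = c'.blocks) (hk : (k : ℕ) = k') :
    (⟨c, k⟩ : Σ c : Composition n, Fin (c.length + 1)) = ⟨c', k'⟩ := by
  obtain rfl : c = c' := Composition.ext hb
  obtain rfl : k = k' := Fin.ext hk
  rfl

lemma sigmaT2_ext {n : ℕ}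
    {p q : Σ r : (Σ m : Fin (n + 1), Composition (n - m.1)), Composition r.1.1}
    (hm : (p.1.1 : ℕ) = q.1.1) (h1 : p.1.2.blocks = q.1.2.blocks)
    (h2 : p.2.blocks = q.2.blocks) : p = q := by
  obtain ⟨⟨m, c2⟩, c1⟩ := p
  obtain ⟨⟨m', c2'⟩, c1'⟩ := q
  obtain rfl : m = m' := Fin.ext hm
  obtain rfl : c2 = c2' := Composition.ext h1
  obtain rfl : c1 = c1' := Composition.ext h2
  rfl

def compEquiv (n : ℕ) :
    (Σ r : (Σ m : Fin (n + 1), Composition (n - m.1)), Composition r.1.1) ≃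
      (Σ c : Composition n, Fin (c.length + 1)) where
  toFun p := ⟨capp (Nat.add_sub_cancel' (Nat.lt_succ_iff.mp p.1.1.isLt)) p.2 p.1.2,
    ⟨p.2.length, by rw [capp_length]; omega⟩⟩
  invFun q := ⟨⟨⟨q.1.sizeUpTo q.2.1, by have := q.1.sizeUpTo_le q.2.1; omega⟩,
    dropC q.1 q.2.1⟩, takeC q.1 q.2.1⟩
  left_inv p := by
    refine sigmaT2_ext ?_ ?_ ?_
    · show ((p.2.blocks ++ p.1.2.blocks).take p.2.blocks.length).sum = _
      rw [List.take_left]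
      exact p.2.blocks_sum
    · show (p.2.blocks ++ p.1.2.blocks).drop p.2.blocks.length = p.1.2.blocks
      exact List.drop_left
    · show (p.2.blocks ++ p.1.2.blocks).take p.2.blocks.length = p.2.blocks
      exact List.take_left
  right_inv q := by
    refine sigmaT1_ext ?_ ?_
    · show q.1.blocks.take q.2.1 ++ q.1.blocks.drop q.2.1 = q.1.blocks
      exact List.take_append_drop _ _
    · show (q.1.blocks.take q.2.1).length = q.2.1
      rw [List.length_take]
      have := q.2.isLt
      have : q.1.length = q.1.blocks.length := rfl
      omega

lemma comp_mul (f g h : MSeries B) :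
    (f.mul g).comp h = (f.comp h).mul (g.comp h) := by
  funext n x
  simp only [comp, mul, Finset.sum_mul, Finset.mul_sum]
  rw [Finset.sum_sigma', Finset.sum_sigma', Finset.sum_sigma',
    Finset.univ_sigma_univ, Finset.univ_sigma_univ, Finset.univ_sigma_univ]
  refine (Fintype.sum_equiv (compEquiv n) _ _ ?_).symm
  rintro ⟨⟨m, c2⟩, c1⟩
  simp only [compEquiv, Equiv.coe_fn_mk]
  refine congrArg₂ (· * ·) ?_ ?_
  · refine apply_congr f rfl (fun i => ?_)
    refine apply_congr h (capp_blocksFun_left _ _ _ rfl).symm (fun j => ?_)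
    refine congrArg x (Fin.ext ?_)
    simp only [Fin.coe_castLE, Composition.coe_embedding, Fin.val_mk]
    exact (congrArg (· + (j:ℕ)) (capp_sizeUpTo_le _ c1 c2 _ (le_of_lt i.isLt))).symm
  · refine apply_congr g (by rw [capp_length]; omega) (fun i => ?_)
    refine apply_congr h (capp_blocksFun_right _ _ _ rfl).symm (fun j => ?_)
    refine congrArg x (Fin.ext ?_)
    simp only [Composition.coe_embedding, Fin.val_mk]
    show _ = (capp _ c1 c2).sizeUpTo (c1.length + (i:ℕ)) + (j:ℕ)
    rw [capp_sizeUpTo_add]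
    exact (Nat.add_assoc _ _ _).symm

end MSeries

open MSeries in
/-- For `f = I·F ∈ G_B^I`: `S_f⁻¹ · I · S_f = (F·I) ∘ (I·S_f) = (F·I) ∘ (I·F)^{∘-1}`. -/
theorem Sinv_I_S {K B : Type u} [Field K] [CharZero K] [Ring B] [Algebra K B]
    (F S Sinv h : MSeries B)
    (hF : IsMultSeries K F) (hF0 : IsUnit (F 0 fun i => i.elim0))
    (hinv1 : (idS.mul F).comp h = idS) (hinv2 : h.comp (idS.mul F) = idS)
    (hSdef : h = idS.mul S)
    (hS1 : Sinv.mul S = oneS) (hS2 : S.mul Sinv = oneS) :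
    (Sinv.mul idS).mul S = (F.mul idS).comp (idS.mul S) ∧
    (Sinv.mul idS).mul S = (F.mul idS).comp h := by
  subst hSdef
  have h0 : ∀ x, (idS.mul S) 0 x = 0 := idS_mul_zero S
  have e1 : (idS.comp (idS.mul S)).mul (F.comp (idS.mul S)) = idS := by
    rw [← comp_mul]; exact hinv1
  rw [idS_comp _ h0, mul_assoc'] at e1
  have e2 : S.mul (F.comp (idS.mul S)) = oneS := eq_one_of_idS_mul e1
  have e3 : F.comp (idS.mul S) = Sinv := by
    calc F.comp (idS.mul S) = (Sinv.mul S).mul (F.comp (idS.mul S)) := by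
          rw [hS1, MSeries.one_mul]
      _ = Sinv.mul (S.mul (F.comp (idS.mul S))) := mul_assoc' _ _ _
      _ = Sinv := by rw [e2, MSeries.mul_one]
  have key : (Sinv.mul idS).mul S = (F.mul idS).comp (idS.mul S) := by
    rw [comp_mul, idS_comp _ h0, e3, mul_assoc']
  exact ⟨key, key⟩
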